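/- For all real N ≥ 2, integers K ≥ 2, and ε ≥ 0, define δ1(ε) = (N^(K-1)-1)/((N-1)·(e^ε + N^(K-1) - 1)) and δ2(ε) = ((N·e^ε)^(K-1)-1)/((N·e^ε - 1)·(N·e^ε)^(K-1)). Then δ1(ε) ≥ δ2(ε). -/

import Mathlib

lemma geom_aux (y : ℝ) (hy : 2 ≤ y) (m : ℕ) :
    (y^m - 1)/((y-1)*y^m) = ∑ i ∈ Finset.range m, (1/y)^(i+1) := by
  have hy0 : (0:ℝ) < y := by linarith
  have hy0' : y ≠ 0 := ne_of_gt hy0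
  have h1 : y - 1 ≠ 0 := by linarith
  induction m with
  | zero => simp
  | succ n ih =>
    rw [Finset.sum_range_succ, ← ih]
    have hpn : (y:ℝ)^n ≠ 0 := pow_ne_zero n hy0'
    rw [div_pow, one_pow]
    field_simp
    ring

theorem stmt_2 (N ε : ℝ) (K : ℕ) (hN : 2 ≤ N) (hK : 2 ≤ K) (hε : 0 ≤ ε) :
    (N^(K-1) - 1)/((N-1) * (Real.exp ε + N^(K-1) - 1))
      ≥ ((N * Real.exp ε)^(K-1) - 1)/((N * Real.exp ε - 1) * (N * Real.exp ε)^(K-1)) := by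
  set E := Real.exp ε with hEdef
  have hE : 1 ≤ E := Real.one_le_exp hε
  set m := K - 1 with hm
  have hm1 : 1 ≤ m := by omega
  have hN0 : (0:ℝ) < N := by linarith
  have hE0 : (0:ℝ) < E := by linarith
  have hNE : 2 ≤ N * E := by nlinarith
  have hM : (2:ℝ) ≤ N ^ m := by
    calc (2:ℝ) ≤ N := hN
    _ = N ^ 1 := (pow_one N).symm
    _ ≤ N ^ m := pow_le_pow_right₀ (by linarith) hm1
  have key2 := geom_aux (N*E) hNE m
  have key1 := geom_aux N hN m
  have hsum : ∑ i ∈ Finset.range m, (1/(N*E))^(i+1)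
      ≤ (1/E) * ∑ i ∈ Finset.range m, (1/N)^(i+1) := by
    rw [Finset.mul_sum]
    apply Finset.sum_le_sum
    intro i _
    have h1 : (1/(N*E) : ℝ)^(i+1) = (1/N)^(i+1) * (1/E)^(i+1) := by
      rw [← mul_pow]; ring_nf
    rw [h1]
    have h2 : ((1/E : ℝ))^(i+1) ≤ 1/E := by
      have h3 : (0:ℝ) ≤ 1/E := by positivity
      have h4 : (1/E : ℝ) ≤ 1 := by
        rw [div_le_one hE0]; linarith
      calc (1/E : ℝ)^(i+1) ≤ (1/E)^1 := pow_le_pow_of_le_one h3 h4 (by omega)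
      _ = 1/E := pow_one _
    calc (1/N : ℝ)^(i+1) * (1/E)^(i+1) ≤ (1/N)^(i+1) * (1/E) :=
          mul_le_mul_of_nonneg_left h2 (by positivity)
    _ = 1/E * (1/N)^(i+1) := by ring
  rw [ge_iff_le, key2]
  calc ∑ i ∈ Finset.range m, (1/(N*E))^(i+1)
      ≤ (1/E) * ∑ i ∈ Finset.range m, (1/N)^(i+1) := hsum
    _ = (1/E) * ((N^m - 1)/((N-1)*N^m)) := by rw [← key1]
    _ = (N^m - 1)/((N-1)*N^m*E) := by
        rw [one_div, inv_mul_eq_div, div_div]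
    _ ≤ (N^m - 1)/((N-1)*(E + N^m - 1)) := by
        rw [div_le_div_iff₀ (mul_pos (mul_pos (by linarith : (0:ℝ) < N - 1) (by positivity : (0:ℝ) < N^m)) hE0) (mul_pos (by linarith : (0:ℝ) < N - 1) (by nlinarith : (0:ℝ) < E + N^m - 1))]
        nlinarith [mul_nonneg (mul_nonneg (by linarith : (0:ℝ) ≤ N^m - 1) (by linarith : (0:ℝ) ≤ N - 1)) (mul_nonneg (by linarith : (0:ℝ) ≤ E - 1) (by linarith : (0:ℝ) ≤ N^m - 1))]
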